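/- Fix p ≥ 1. Let T be an order-p corner tree, i.e., a finite rooted tree with vertex labels f : ℝ^d → ℝ and edge labels ℓ ∈ {-, =, +}^p, where for ℓ = (ℓ_1, ..., ℓ_p) the predicate ℓ(r, s) on points r, s ∈ ℤ^p holds iff for every i ∈ [p]: r_i < s_i if ℓ_i = +, r_i = s_i if ℓ_i is =, and r_i > s_i if ℓ_i = -. Then for every data array z : [0,T_1] × ⋯ × [0,T_p] → ℝ^d, CTS(T, z) = ∑_{r ∈ [0,T_1]×⋯×[0,T_p]} CTPS(T, z)_r, where CTS(T, z) := ∑_{r : V(T) → grid, ALLOWED(T,r)} ∏_{i=1}^n 𝔳(v_i)(z_{r^i}), ALLOWED(T, r) := ⋀_{e ∈ E(T)} 𝔢(e)(r^{source(e)}, r^{target(e)}), and CTPS is defined recursively by CTPS(T, z)_t = 𝔳(v_1)(z_t) for the single-vertex tree and CTPS(T, z)_t = 𝔳(v_1)(z_t) · ∏_{e = (v_1, v_i) ∈ E(T)} CUMSUM(𝔢(e), CTPS(T|_{v_i}, z))_t otherwise, with CUMSUM(ℓ, x)_t := ∑_{r : ℓ(t, r)} x_r. -/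
import Mathlib


open scoped Classical

/-- The three elementary direction symbols `-`, `=`, `+`. -/
inductive Sign : Type where
  | neg | eq | pos
  deriving DecidableEq

/-- The predicate on a pair of integer coordinates denoted by a symbol:
`+` means `<`, `=` means `=`, `-` means `>`. -/
def Sign.rel : Sign → ℤ → ℤ → Prop
  | .pos, a, b => a < b
  | .eq,  a, b => a = b
  | .neg, a, b => a > b

/-- For an edge label `ℓ ∈ {-, =, +}^p`, the predicate `ℓ(r, s)` on points
`r, s ∈ ℤ^p`: for every coordinate `i`, `rᵢ < sᵢ` if `ℓᵢ = +`, `rᵢ = sᵢ` if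
`ℓᵢ` is `=`, and `rᵢ > sᵢ` if `ℓᵢ = -`. -/
def dirPred {p : ℕ} (ℓ : Fin p → Sign) (r s : Fin p → ℤ) : Prop :=
  ∀ i : Fin p, (ℓ i).rel (r i) (s i)

/-- A corner tree: a finite rooted tree (edges directed away from the root) with
vertex labels in `F` and edge labels in `L`.  A node carries its vertex label, the
number `k` of children, the labels of the `k` outgoing edges, and the `k` subtrees. -/
inductive CTree (L F : Type) : Type where
  | node (f : F) (k : ℕ) (dir : Fin k → L) (child : Fin k → CTree L F)

namespace CTree

variable {L F G : Type}

/-- The vertex set `V(T)` of a corner tree; `none` is the root, and `some ⟨i, v⟩` is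
the vertex `v` of the `i`-th subtree. -/
def Vertex : CTree L F → Type
  | node _ k _ child => Option ((i : Fin k) × Vertex (child i))

/-- The root vertex `v₁` of a corner tree. -/
def rootVertex : (T : CTree L F) → T.Vertex
  | node _ _ _ _ => none

instance fintypeVertex : (T : CTree L F) → Fintype T.Vertex
  | node _ k _ child =>
    haveI : ∀ i : Fin k, Fintype (Vertex (child i)) := fun i => fintypeVertex (child i)
    inferInstanceAs (Fintype (Option ((i : Fin k) × Vertex (child i))))

/-- `ALLOWED(T, r)`: the conjunction, over all edges `e` of `T`, of the predicate of
the edge label of `e` applied to `(r^(source e), r^(target e))`. -/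
def Allowed (pred : L → G → G → Prop) : (T : CTree L F) → (T.Vertex → G) → Prop
  | node _ k dir child, r => ∀ i : Fin k,
      pred (dir i) (r none) (r (some ⟨i, rootVertex (child i)⟩)) ∧
      Allowed pred (child i) (fun v => r (some ⟨i, v⟩))

end CTree

/-- An order-`p` corner tree: edge labels in `{-, =, +}^p`, vertex labels `ℝ^d → ℝ`. -/
abbrev PCTree (p d : ℕ) : Type := CTree (Fin p → Sign) ((Fin d → ℝ) → ℝ)

/-- The integer grid `[0,T₁] × ⋯ × [0,T_p]`. -/
abbrev GridP {p : ℕ} (Ts : Fin p → ℕ) : Type := (i : Fin p) → Fin (Ts i + 1)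

/-- A grid point, viewed as a point of `ℤ^p`. -/
def gridToZ {p : ℕ} {Ts : Fin p → ℕ} (t : GridP Ts) : Fin p → ℤ := fun i => (t i : ℤ)

/-- The product `∏_{i=1}^n 𝔳(vᵢ)(z_{r^i})` of the vertex-label evaluations along an
assignment `r : V(T) → [0,T₁]×⋯×[0,T_p]`. -/
noncomputable def vertexProd {p d : ℕ} {Ts : Fin p → ℕ} (z : GridP Ts → Fin d → ℝ) :
    (T : PCTree p d) → (T.Vertex → GridP Ts) → ℝ
  | .node f k _ child, r =>
      f (z (r none)) * ∏ i : Fin k, vertexProd z (child i) (fun v => r (some ⟨i, v⟩))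

/-- The corner tree sum
`CTS(T, z) = ∑_{r : V(T) → grid, ALLOWED(T,r)} ∏ᵢ 𝔳(vᵢ)(z_{r^i})`. -/
noncomputable def CTS {p d : ℕ} {Ts : Fin p → ℕ} (T : PCTree p d)
    (z : GridP Ts → Fin d → ℝ) : ℝ :=
  ∑ r ∈ Finset.univ.filter
      (fun r : T.Vertex → GridP Ts => CTree.Allowed dirPred T (fun v => gridToZ (r v))),
    vertexProd z T r

/-- The corner-tree pre-sum `CTPS(T, z)`, defined recursively:
`CTPS(T,z)_t = 𝔳(v₁)(z_t) ⬝ ∏_{e=(v₁,vᵢ)} CUMSUM(𝔢(e), CTPS(T|_{vᵢ}, z))_t`,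
where `CUMSUM(ℓ, x)_t = ∑_{r : ℓ(t,r)} x_r`; for a single-vertex tree the product is
empty and `CTPS(T,z)_t = 𝔳(v₁)(z_t)`. -/
noncomputable def CTPS {p d : ℕ} {Ts : Fin p → ℕ} (z : GridP Ts → Fin d → ℝ) :
    PCTree p d → GridP Ts → ℝ
  | .node f k dir child, t =>
      f (z t) * ∏ i : Fin k,
        ∑ r ∈ Finset.univ.filter (fun r : GridP Ts => dirPred (dir i) (gridToZ t) (gridToZ r)),
          CTPS z (child i) r


private def E {G : Type} {k : ℕ} (V : Fin k → Type) :
    (G × ∀ i, V i → G) ≃ (Option ((i : Fin k) × V i) → G) where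
  toFun := fun p o => o.elim p.1 (fun iv => p.2 iv.1 iv.2)
  invFun := fun r => (r none, fun i v => r (some ⟨i, v⟩))
  left_inv := fun p => rfl
  right_inv := fun r => by
    funext o
    rcases o with _ | ⟨i, v⟩ <;> rfl

private theorem key {p d : ℕ} {Ts : Fin p → ℕ} (z : GridP Ts → Fin d → ℝ) :
    ∀ (T : PCTree p d) (t : GridP Ts),
      (∑ r : T.Vertex → GridP Ts,
        if r T.rootVertex = t ∧ CTree.Allowed dirPred T (fun v => gridToZ (r v))
          then vertexProd z T r else 0) = CTPS z T t
  | .node f k dir child, t => by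
    have h1 :
        (∑ r : (CTree.node f k dir child).Vertex → GridP Ts,
          if r (CTree.node f k dir child).rootVertex = t ∧
              CTree.Allowed dirPred (CTree.node f k dir child) (fun v => gridToZ (r v))
            then vertexProd z (CTree.node f k dir child) r else 0)
        = ∑ q : GridP Ts × ∀ i : Fin k, (child i).Vertex → GridP Ts,
            if q.1 = t ∧ (∀ i : Fin k,
                dirPred (dir i) (gridToZ q.1) (gridToZ (q.2 i (child i).rootVertex)) ∧
                CTree.Allowed dirPred (child i) (fun v => gridToZ (q.2 i v)))
              then f (z q.1) * ∏ i : Fin k, vertexProd z (child i) (q.2 i) else 0 :=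
 by
      refine Finset.sum_nbij'
        (fun r => (⟨r none, fun i v => r (some ⟨i, v⟩)⟩ :
          GridP Ts × ∀ i : Fin k, (child i).Vertex → GridP Ts))
        (fun q o => o.elim q.1 (fun iv => q.2 iv.1 iv.2))
        (fun a _ => Finset.mem_univ _) (fun a _ => Finset.mem_univ _)
        (fun a _ => ?_) (fun a _ => rfl) (fun a _ => if_congr Iff.rfl rfl rfl)
      funext o
      rcases o with _ | ⟨i, v⟩ <;> rfl
    rw [h1, Fintype.sum_prod_type]
    rw [Finset.sum_eq_single_of_mem t (Finset.mem_univ t) (by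
      intro b _ hb
      refine Finset.sum_eq_zero fun s _ => ?_
      rw [if_neg]
      exact fun h => hb h.1)]
    simp only [true_and]
    have h3 : ∀ s : ∀ i : Fin k, (child i).Vertex → GridP Ts,
        (if (∀ i : Fin k,
              dirPred (dir i) (gridToZ t) (gridToZ (s i (child i).rootVertex)) ∧
              CTree.Allowed dirPred (child i) (fun v => gridToZ (s i v)))
          then f (z t) * ∏ i : Fin k, vertexProd z (child i) (s i) else 0)
        = f (z t) * ∏ i : Fin k,
            (if dirPred (dir i) (gridToZ t) (gridToZ (s i (child i).rootVertex)) ∧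
                CTree.Allowed dirPred (child i) (fun v => gridToZ (s i v))
              then vertexProd z (child i) (s i) else 0) := by
      intro s
      by_cases h : ∀ i : Fin k,
          dirPred (dir i) (gridToZ t) (gridToZ (s i (child i).rootVertex)) ∧
          CTree.Allowed dirPred (child i) (fun v => gridToZ (s i v))
      · rw [if_pos h]
        congr 1
        exact (Finset.prod_congr rfl fun i _ => if_pos (h i)).symm
      · rw [if_neg h]
        obtain ⟨i, hi⟩ := not_forall.mp h
        symm
        apply mul_eq_zero_of_right
        exact Finset.prod_eq_zero (Finset.mem_univ i) (if_neg hi)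
    simp_rw [h3]
    rw [← Finset.mul_sum]
    show f (z t) * _ = CTPS z (CTree.node f k dir child) t
    rw [CTPS]
    congr 1
    have hfac : ∀ i : Fin k,
        (∑ q : (child i).Vertex → GridP Ts,
            if dirPred (dir i) (gridToZ t) (gridToZ (q (child i).rootVertex)) ∧
                CTree.Allowed dirPred (child i) (fun v => gridToZ (q v))
              then vertexProd z (child i) q else 0)
        = ∑ u ∈ Finset.univ.filter
            (fun u : GridP Ts => dirPred (dir i) (gridToZ t) (gridToZ u)),
            CTPS z (child i) u := by
      intro i
      rw [Finset.sum_filter]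
      calc (∑ q : (child i).Vertex → GridP Ts,
            if dirPred (dir i) (gridToZ t) (gridToZ (q (child i).rootVertex)) ∧
                CTree.Allowed dirPred (child i) (fun v => gridToZ (q v))
              then vertexProd z (child i) q else 0)
        = ∑ q : (child i).Vertex → GridP Ts, ∑ u : GridP Ts,
            if u = q (child i).rootVertex then
              (if dirPred (dir i) (gridToZ t) (gridToZ u) ∧
                  CTree.Allowed dirPred (child i) (fun v => gridToZ (q v))
                then vertexProd z (child i) q else 0) else 0 := by
                  refine Finset.sum_congr rfl fun q _ => ?_
                  rw [Finset.sum_ite_eq']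
                  simp
      _ = ∑ u : GridP Ts, ∑ q : (child i).Vertex → GridP Ts,
            if u = q (child i).rootVertex then
              (if dirPred (dir i) (gridToZ t) (gridToZ u) ∧
                  CTree.Allowed dirPred (child i) (fun v => gridToZ (q v))
                then vertexProd z (child i) q else 0) else 0 := Finset.sum_comm
      _ = ∑ u : GridP Ts,
            if dirPred (dir i) (gridToZ t) (gridToZ u) then CTPS z (child i) u else 0 := by
                  refine Finset.sum_congr rfl fun u _ => ?_
                  by_cases hD : dirPred (dir i) (gridToZ t) (gridToZ u)
                  · rw [if_pos hD, ← key z (child i) u]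
                    refine Finset.sum_congr rfl fun q _ => ?_
                    by_cases h1 : u = q (child i).rootVertex
                    · subst h1
                      by_cases hA : CTree.Allowed dirPred (child i) (fun v => gridToZ (q v)) <;>
                        simp [hA, hD]
                    · rw [if_neg h1, if_neg (fun hc => h1 hc.1.symm)]
                  · rw [if_neg hD]
                    refine Finset.sum_eq_zero fun q _ => ?_
                    split_ifs with hc1 hc2
                    · exact absurd hc2.1 hD
                    · rfl
                    · rfl
    conv_rhs => rw [show (∏ i : Fin k, ∑ u ∈ Finset.univ.filter
          (fun u : GridP Ts => dirPred (dir i) (gridToZ t) (gridToZ u)),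
          CTPS z (child i) u)
        = ∏ i : Fin k, ∑ q : (child i).Vertex → GridP Ts,
            (if dirPred (dir i) (gridToZ t) (gridToZ (q (child i).rootVertex)) ∧
                CTree.Allowed dirPred (child i) (fun v => gridToZ (q v))
              then vertexProd z (child i) q else 0)
        from Finset.prod_congr rfl fun i _ => (hfac i).symm]
    rw [Finset.prod_univ_sum, Fintype.piFinset_univ]

/-- Fix `p ≥ 1`.  For every order-`p` corner tree `T` and every data
array `z : [0,T₁]×⋯×[0,T_p] → ℝ^d`,
`CTS(T, z) = ∑_{r ∈ [0,T₁]×⋯×[0,T_p]} CTPS(T, z)_r`. -/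
theorem cts_eq_sum_ctps_orderP {p d : ℕ} (hp : 1 ≤ p) {Ts : Fin p → ℕ}
    (T : PCTree p d) (z : GridP Ts → Fin d → ℝ) :
    CTS T z = ∑ t : GridP Ts, CTPS z T t := by
  rw [CTS, Finset.sum_filter]
  simp_rw [← key z T]
  rw [Finset.sum_comm]
  refine Finset.sum_congr rfl fun r _ => ?_
  simp_rw [ite_and]
  rw [Finset.sum_ite_eq]
  simp
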